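/- Let s : ℝ → ℝ be the π-periodic function determined by s(φ) = sin φ for φ ∈ [−π/2, π/2) and s(φ + π) = s(φ). Then for every x ∈ ℝ, ∫₀^{2π} s(φ) · σ(x·cos φ + sin φ) dφ = arctan x, where σ(z) = max(z, 0) is the ReLU function. -/

import Mathlib

open MeasureTheory Real Set Filter

/-- Let `s : ℝ → ℝ` be the `π`-periodic function with `s φ = sin φ` on
`[-π/2, π/2)`. Then `∫₀^{2π} s(φ) · σ(x cos φ + sin φ) dφ = arctan x`,
where `σ(z) = max z 0` is the ReLU function. -/
theorem statement6 (s : ℝ → ℝ)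
    (hs_per : ∀ φ : ℝ, s (φ + Real.pi) = s φ)
    (hs_eq : ∀ φ ∈ Set.Ico (-(Real.pi / 2)) (Real.pi / 2), s φ = Real.sin φ)
    (x : ℝ) :
    ∫ φ in (0:ℝ)..(2 * Real.pi),
        s φ * max (x * Real.cos φ + Real.sin φ) 0
      = Real.arctan x := by
  have pi_pos := Real.pi_pos
  set θ := Real.arctan x with hθdef
  have hθlt : θ < Real.pi / 2 := Real.arctan_lt_pi_div_two x
  have hθgt : -(Real.pi / 2) < θ := Real.neg_pi_div_two_lt_arctan x
  have hc : 0 < Real.cos θ := Real.cos_arctan_pos x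
  have hxc : x * Real.cos θ = Real.sin θ := by
    have htan : Real.tan θ = x := Real.tan_arctan x
    rw [Real.tan_eq_sin_div_cos] at htan
    field_simp at htan
    linarith [htan]
  -- the key reformulation of the linear combination
  have key : ∀ φ : ℝ, x * Real.cos φ + Real.sin φ = Real.sin (φ + θ) / Real.cos θ := by
    intro φ
    rw [Real.sin_add, eq_div_iff (ne_of_gt hc)]
    linear_combination Real.cos φ * hxc
  set f : ℝ → ℝ := fun φ => s φ * max (x * Real.cos φ + Real.sin φ) 0 with hf
  -- f is 2π-periodic
  have hper : Function.Periodic f (2 * Real.pi) := by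
    intro φ
    have hs2 : s (φ + 2 * Real.pi) = s φ := by
      have h1 := hs_per (φ + Real.pi)
      have h2 := hs_per φ
      have : φ + Real.pi + Real.pi = φ + 2 * Real.pi := by ring
      rw [this] at h1
      rw [h1, h2]
    simp only [hf, hs2, Real.cos_add_two_pi, Real.sin_add_two_pi]
  -- shift the integration interval
  have hshift : (∫ φ in (0:ℝ)..(2 * Real.pi), f φ)
      = ∫ φ in (-θ)..(-θ + 2 * Real.pi), f φ := by
    have := hper.intervalIntegral_add_eq 0 (-θ)
    simpa using this
  -- s on [π/2, 3π/2)
  have hs_eq2 : ∀ φ : ℝ, Real.pi / 2 ≤ φ → φ < Real.pi - θ → s φ = -Real.sin φ := by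
    intro φ h1 h2
    have hval : s (φ - Real.pi) = Real.sin (φ - Real.pi) := by
      apply hs_eq
      constructor
      · linarith
      · linarith
    have hper' : s (φ - Real.pi + Real.pi) = s (φ - Real.pi) := hs_per _
    rw [sub_add_cancel] at hper'
    rw [hper', hval, Real.sin_sub_pi]
  -- positivity of the argument on [-θ, π - θ]
  have hpos : ∀ φ : ℝ, -θ ≤ φ → φ ≤ Real.pi - θ →
      max (x * Real.cos φ + Real.sin φ) 0 = x * Real.cos φ + Real.sin φ := by
    intro φ h1 h2
    apply max_eq_left
    rw [key]
    apply div_nonneg _ hc.le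
    apply Real.sin_nonneg_of_nonneg_of_le_pi <;> linarith
  -- nonpositivity on [π - θ, 2π - θ]
  have hneg : ∀ φ : ℝ, Real.pi - θ ≤ φ → φ ≤ 2 * Real.pi - θ →
      max (x * Real.cos φ + Real.sin φ) 0 = 0 := by
    intro φ h1 h2
    apply max_eq_right
    rw [key]
    apply div_nonpos_of_nonpos_of_nonneg _ hc.le
    have : Real.sin (φ + θ) = -Real.sin (φ + θ - Real.pi) := by
      rw [Real.sin_sub_pi]; ring
    rw [this, neg_nonpos]
    apply Real.sin_nonneg_of_nonneg_of_le_pi <;> linarith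
  -- the continuous comparison functions
  set g1 : ℝ → ℝ := fun φ => Real.sin φ * (x * Real.cos φ + Real.sin φ) with hg1
  set g2 : ℝ → ℝ := fun φ => -Real.sin φ * (x * Real.cos φ + Real.sin φ) with hg2
  have hcontg1 : Continuous g1 := by fun_prop
  have hcontg2 : Continuous g2 := by fun_prop
  -- the antiderivative
  set F : ℝ → ℝ := fun φ => x * Real.sin φ ^ 2 / 2 + φ / 2 - Real.sin φ * Real.cos φ / 2
    with hF
  have hderiv : ∀ φ : ℝ, HasDerivAt F (g1 φ) φ := by
    intro φ
    have h1 : HasDerivAt Real.sin (Real.cos φ) φ := Real.hasDerivAt_sin φ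
    have h2 : HasDerivAt Real.cos (-Real.sin φ) φ := Real.hasDerivAt_cos φ
    have h3 := (((h1.pow 2).const_mul x).div_const 2).add
        ((hasDerivAt_id φ).div_const 2) |>.sub ((h1.mul h2).div_const 2)
    refine h3.congr_deriv ?_
    have hsc := Real.sin_sq_add_cos_sq φ
    simp only [hg1]
    push_cast
    nlinarith [hsc]
  -- equalities of endpoints
  have hb1 : -θ < Real.pi / 2 := by linarith
  have hb2 : Real.pi / 2 < Real.pi - θ := by linarith
  have hb3 : Real.pi - θ < 2 * Real.pi - θ := by linarith
  -- interval integrability of f on the pieces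
  have haef1 : ∀ᵐ φ : ℝ, φ ∈ Set.uIoc (-θ) (Real.pi / 2) → f φ = g1 φ := by
    have hne : ∀ᵐ (φ : ℝ), φ ≠ Real.pi / 2 := by
      refine ae_iff.mpr ?_
      simp [measure_singleton]
    filter_upwards [hne] with φ hφ hmem
    rw [Set.uIoc_of_le hb1.le, Set.mem_Ioc] at hmem
    have hlt : φ < Real.pi / 2 := lt_of_le_of_ne hmem.2 hφ
    have hseq : s φ = Real.sin φ := hs_eq φ ⟨by linarith, hlt⟩
    simp only [hf, hg1, hseq, hpos φ hmem.1.le (by linarith)]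
  have haef2 : ∀ᵐ φ : ℝ, φ ∈ Set.uIoc (Real.pi / 2) (Real.pi - θ) → f φ = g2 φ := by
    refine Eventually.of_forall fun φ hmem => ?_
    rw [Set.uIoc_of_le hb2.le, Set.mem_Ioc] at hmem
    rcases eq_or_lt_of_le hmem.2 with h | h
    · have hz := hneg φ (le_of_eq h.symm) (by linarith)
      have hz2 : x * Real.cos φ + Real.sin φ = 0 := by
        have := hpos φ (by linarith) hmem.2
        rw [hz] at this; exact this.symm
      show s φ * max (x * Real.cos φ + Real.sin φ) 0 = -Real.sin φ * (x * Real.cos φ + Real.sin φ)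
      rw [hz, hz2]
      ring
    · have hseq : s φ = -Real.sin φ := hs_eq2 φ hmem.1.le h
      simp only [hf, hg2, hseq, hpos φ (by linarith) hmem.2]
  have hif1 : IntervalIntegrable f volume (-θ) (Real.pi / 2) :=
    (hcontg1.intervalIntegrable _ _).congr_ae (Filter.EventuallyEq.symm ((ae_restrict_iff' measurableSet_uIoc).mpr haef1))
  have hif2 : IntervalIntegrable f volume (Real.pi / 2) (Real.pi - θ) :=
    (hcontg2.intervalIntegrable _ _).congr_ae (Filter.EventuallyEq.symm ((ae_restrict_iff' measurableSet_uIoc).mpr haef2))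
  have hif3 : IntervalIntegrable f volume (Real.pi - θ) (2 * Real.pi - θ) := by
    have : IntervalIntegrable (fun _ : ℝ => (0:ℝ)) volume (Real.pi - θ) (2 * Real.pi - θ) :=
      intervalIntegrable_const
    apply this.congr_ae
    refine (ae_restrict_iff' measurableSet_uIoc).mpr (Eventually.of_forall fun φ hmem => ?_)
    rw [Set.uIoc_of_le hb3.le, Set.mem_Ioc] at hmem
    simp only [hf, hneg φ hmem.1.le hmem.2, mul_zero]
  -- values of the three piece integrals
  have hI1 : (∫ φ in (-θ)..(Real.pi / 2), f φ) = F (Real.pi / 2) - F (-θ) := by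
    rw [intervalIntegral.integral_congr_ae haef1]
    exact intervalIntegral.integral_eq_sub_of_hasDerivAt (fun φ _ => hderiv φ)
      (hcontg1.intervalIntegrable _ _)
  have hI2 : (∫ φ in (Real.pi / 2)..(Real.pi - θ), f φ) = -(F (Real.pi - θ) - F (Real.pi / 2)) := by
    rw [intervalIntegral.integral_congr_ae haef2]
    have : ∀ φ : ℝ, HasDerivAt (fun t => -F t) (g2 φ) φ := by
      intro φ
      have := (hderiv φ).neg
      refine this.congr_deriv ?_
      simp only [hg1, hg2]; ring
    rw [intervalIntegral.integral_eq_sub_of_hasDerivAt (fun φ _ => this φ)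
      (hcontg2.intervalIntegrable _ _)]
    ring
  have hI3 : (∫ φ in (Real.pi - θ)..(2 * Real.pi - θ), f φ) = 0 := by
    rw [intervalIntegral.integral_congr (g := fun _ => (0:ℝ))]
    · simp
    · intro φ hmem
      rw [Set.uIcc_of_le hb3.le, Set.mem_Icc] at hmem
      simp only [hf, hneg φ hmem.1 hmem.2, mul_zero]
  -- combine
  have hsplit : (∫ φ in (-θ)..(-θ + 2 * Real.pi), f φ)
      = (∫ φ in (-θ)..(Real.pi / 2), f φ) + (∫ φ in (Real.pi / 2)..(Real.pi - θ), f φ)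
        + (∫ φ in (Real.pi - θ)..(2 * Real.pi - θ), f φ) := by
    have h23 : (∫ φ in (Real.pi / 2)..(2 * Real.pi - θ), f φ)
        = (∫ φ in (Real.pi / 2)..(Real.pi - θ), f φ)
          + (∫ φ in (Real.pi - θ)..(2 * Real.pi - θ), f φ) :=
      (intervalIntegral.integral_add_adjacent_intervals hif2 hif3).symm
    have h123 : (∫ φ in (-θ)..(2 * Real.pi - θ), f φ)
        = (∫ φ in (-θ)..(Real.pi / 2), f φ)
          + (∫ φ in (Real.pi / 2)..(2 * Real.pi - θ), f φ) :=
      (intervalIntegral.integral_add_adjacent_intervals hif1 (hif2.trans hif3)).symm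
    have hend : -θ + 2 * Real.pi = 2 * Real.pi - θ := by ring
    rw [hend, h123, h23, add_assoc]
  -- final computation
  have hval : (∫ φ in (0:ℝ)..(2 * Real.pi), f φ) = θ := by
    rw [hshift, hsplit, hI1, hI2, hI3]
    have e1 : F (Real.pi / 2) = x / 2 + Real.pi / 4 := by
      simp only [hF, Real.sin_pi_div_two, Real.cos_pi_div_two]
      ring
    have e2 : F (-θ) = x * Real.sin θ ^ 2 / 2 - θ / 2 + Real.sin θ * Real.cos θ / 2 := by
      simp only [hF, Real.sin_neg, Real.cos_neg]
      ring
    have e3 : F (Real.pi - θ) = x * Real.sin θ ^ 2 / 2 + (Real.pi - θ) / 2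
        + Real.sin θ * Real.cos θ / 2 := by
      simp only [hF, Real.sin_pi_sub, Real.cos_pi_sub]
      ring
    rw [e1, e2, e3]
    have hsc := Real.sin_sq_add_cos_sq θ
    linear_combination Real.cos θ * hxc - x * hsc
  exact hval
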